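/- For every integer n ≥ 1, the sum over D from 1 to n of C(n-1, D-1)·exp(−(2 + log(n/D))·D) is at most 1. -/

import Mathlib

open Real Finset

lemma term_le_aux (n D : ℕ) (hn : 1 ≤ n) (hD1 : 1 ≤ D) :
    ((n - 1).choose (D - 1) : ℝ) *
        Real.exp (-(2 + Real.log ((n : ℝ) / (D : ℝ))) * (D : ℝ)) ≤
      (D : ℝ) * Real.exp (-1) ^ D := by
  have hn0 : (0:ℝ) < n := by exact_mod_cast hn
  have hD0 : (0:ℝ) < D := by exact_mod_cast hD1
  have hD' : D - 1 + 1 = D := by omega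
  have hexp : Real.exp (-(2 + Real.log ((n:ℝ)/(D:ℝ))) * (D:ℝ))
      = (Real.exp (-2) * ((D:ℝ)/(n:ℝ))) ^ D := by
    have hexp2 : Real.exp (-(Real.log ((n:ℝ)/(D:ℝ)))) = (D:ℝ)/(n:ℝ) := by
      rw [Real.exp_neg, Real.exp_log (div_pos hn0 hD0), inv_div]
    rw [mul_comm, Real.exp_nat_mul]
    congr 1
    rw [neg_add, Real.exp_add, hexp2]
  rw [hexp]
  set F : ℝ := ((D-1).factorial : ℝ) with hF
  have hFpos : (0:ℝ) < F := by positivity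
  have hfac : F * ((n - 1).choose (D - 1) : ℝ) ≤ (n:ℝ) ^ (D-1) := by
    have h1 : (D-1).factorial * (n-1).choose (D-1) ≤ n ^ (D-1) :=
      le_trans (Nat.descFactorial_eq_factorial_mul_choose (n-1) (D-1) ▸
        Nat.descFactorial_le_pow (n-1) (D-1))
        (Nat.pow_le_pow_left (Nat.sub_le n 1) _)
    rw [hF]
    exact_mod_cast h1
  have hDfacN : D.factorial = D * (D-1).factorial := by
    rw [← hD', Nat.factorial_succ, hD']
  have hDfac : (D.factorial : ℝ) = (D:ℝ) * F := by
    rw [hF]; exact_mod_cast hDfacN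
  have hpow : (D:ℝ) ^ D ≤ Real.exp D * ((D:ℝ) * F) := by
    have h := Real.pow_div_factorial_le_exp (x := (D:ℝ)) hD0.le D
    rw [div_le_iff₀ (by positivity)] at h
    calc (D:ℝ) ^ D ≤ Real.exp D * (D.factorial : ℝ) := h
      _ = Real.exp D * ((D:ℝ) * F) := by rw [hDfac]
  have he : Real.exp (-2) ^ D * Real.exp (D:ℝ) = Real.exp (-1) ^ D := by
    rw [← Real.exp_nat_mul, ← Real.exp_add, ← Real.exp_nat_mul]
    congr 1; ring
  have hnpow : (n:ℝ) ^ (D-1) * (n:ℝ) = (n:ℝ) ^ D := by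
    rw [← pow_succ, hD']
  calc ((n - 1).choose (D - 1) : ℝ) * (Real.exp (-2) * ((D:ℝ)/(n:ℝ))) ^ D
      = ((n - 1).choose (D - 1) : ℝ) * Real.exp (-2) ^ D * (D:ℝ) ^ D / (n:ℝ) ^ D := by
        rw [mul_pow, div_pow]; ring
    _ ≤ ((n:ℝ) ^ (D-1) / F) * Real.exp (-2) ^ D * (Real.exp D * ((D:ℝ) * F)) / (n:ℝ) ^ D := by
        gcongr
        rw [le_div_iff₀ hFpos, mul_comm]; exact hfac
    _ = (D:ℝ) * (Real.exp (-2) ^ D * Real.exp D) * ((n:ℝ) ^ (D-1) / (n:ℝ) ^ D) := by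
        field_simp
    _ = (D:ℝ) * Real.exp (-1) ^ D * ((n:ℝ) ^ (D-1) / (n:ℝ) ^ D) := by rw [he]
    _ ≤ (D:ℝ) * Real.exp (-1) ^ D * 1 := by
        gcongr
        rw [div_le_one (by positivity), ← hnpow]
        have hn1 : (1:ℝ) ≤ (n:ℝ) := by exact_mod_cast hn
        nlinarith [pow_pos hn0 (D-1)]
    _ = (D:ℝ) * Real.exp (-1) ^ D := mul_one _

lemma tail_sum_le : ∑' D : ℕ, (D : ℝ) * Real.exp (-1) ^ D ≤ 1 := by
  have ha : Real.exp (-1) < 1 := Real.exp_lt_one_iff.mpr (by norm_num)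
  have ha0 : 0 < Real.exp (-1) := Real.exp_pos _
  have hnorm : ‖Real.exp (-1)‖ < 1 := by rwa [Real.norm_eq_abs, abs_of_pos ha0]
  rw [tsum_coe_mul_geometric_of_norm_lt_one hnorm]
  rw [div_le_one (by nlinarith)]
  have h1 : Real.exp (-1) = (Real.exp 1)⁻¹ := Real.exp_neg 1
  have h2 : (2.7182818283 : ℝ) < Real.exp 1 := Real.exp_one_gt_d9
  have h3 : 0 < Real.exp 1 := Real.exp_pos 1
  nlinarith [sq_nonneg (1 - Real.exp (-1)), Real.exp_neg 1,
    mul_inv_cancel₀ (ne_of_gt h3), sq_nonneg (Real.exp (-1))]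

/-- For every `n ≥ 1`, `∑_{D=1}^n C(n-1, D-1) exp(-(2 + log(n/D)) D) ≤ 1`. -/
theorem stmt_1 (n : ℕ) (hn : 1 ≤ n) :
    ∑ D ∈ Finset.Icc 1 n,
      ((n - 1).choose (D - 1) : ℝ) *
        Real.exp (-(2 + Real.log ((n : ℝ) / (D : ℝ))) * (D : ℝ)) ≤ 1 := by
  have hstep : ∑ D ∈ Finset.Icc 1 n,
      ((n - 1).choose (D - 1) : ℝ) *
        Real.exp (-(2 + Real.log ((n : ℝ) / (D : ℝ))) * (D : ℝ))
      ≤ ∑ D ∈ Finset.Icc 1 n, (D : ℝ) * Real.exp (-1) ^ D := by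
    apply Finset.sum_le_sum
    intro D hD
    rw [Finset.mem_Icc] at hD
    exact term_le_aux n D hn hD.1
  refine hstep.trans (le_trans ?_ tail_sum_le)
  apply Summable.sum_le_tsum
  · intro i _; positivity
  · have hlt : ‖Real.exp (-1)‖ < 1 := by
      rw [Real.norm_eq_abs, abs_of_pos (Real.exp_pos _)]
      exact Real.exp_lt_one_iff.mpr (by norm_num)
    simpa using summable_pow_mul_geometric_of_norm_lt_one (R := ℝ) 1 hlt
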